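/- Let (X,τ) be a Hausdorff topological space, Φ, Ψ : X → (-∞,+∞] two functions. Assume there is ρ > inf_X Ψ such that the closure of Ψ^{-1}((-∞,ρ)) is compact and sequentially compact, has at least k connected components, and each component intersects the interior of dom(Φ). Suppose Φ is bounded below on the closure of Ψ^{-1}((-∞,ρ)) and Ψ + λΦ is sequentially lower semicontinuous for all sufficiently small λ > 0. Then there exists λ* > 0 such that for every λ ∈ (0,λ*), the function Ψ + λΦ has at least k local minima with respect to the topology τ_Ψ, all lying in dom(Φ) ∩ Ψ^{-1}((-∞,ρ)). -/

import Mathlib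

open Filter Set Topology

/-- `F` is sequentially lower semicontinuous. -/
def SeqLowerSemicontinuousE {X : Type*} [TopologicalSpace X] (F : X → EReal) : Prop :=
  ∀ x : X, ∀ u : ℕ → X, Tendsto u atTop (𝓝 x) → F x ≤ atTop.liminf (fun n => F (u n))

/-- The smallest topology on `X` containing the given topology `τ` and all the
sublevel sets `Ψ⁻¹((-∞, r))`, `r ∈ ℝ`. -/
def tauPsi {X : Type*} (τ : TopologicalSpace X) (Ψ : X → EReal) : TopologicalSpace X :=
  TopologicalSpace.generateFrom
    ({U : Set X | τ.IsOpen U} ∪ Set.range fun r : ℝ => Ψ ⁻¹' Set.Iio (r : EReal))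

/-- Theorem 1 of the paper: under compactness and sequential compactness of the closure of a
sublevel set of `Ψ` having at least `k` connected components, each meeting the interior of
`dom Φ`, with `Φ` bounded below there and `Ψ + λΦ` sequentially lsc for small `λ > 0`,
for all sufficiently small `λ > 0` the function `Ψ + λΦ` has at least `k` `τ_Ψ`-local
minima lying in `dom Φ ∩ Ψ⁻¹((-∞, ρ))`. -/
lemma exists_min_aux {X : Type*} [TopologicalSpace X] {C K : Set X}
    (hseq : IsSeqCompact C) (hKC : K ⊆ C) (hKcl : IsClosed K) (hKne : K.Nonempty)
    {F : X → EReal} (hF : SeqLowerSemicontinuousE F) :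
    ∃ u ∈ K, ∀ y ∈ K, F u ≤ F y := by
  obtain ⟨b, -, hb, hbmem⟩ := exists_seq_tendsto_sInf (hKne.image F) (OrderBot.bddBelow _)
  choose v hvK hvF using hbmem
  obtain ⟨x, hxC, φ, hφ, hφt⟩ := hseq (fun n => hKC (hvK n))
  have hxK : x ∈ K :=
    hKcl.mem_of_tendsto hφt (Eventually.of_forall fun n => hvK (φ n))
  refine ⟨x, hxK, fun y hy => ?_⟩
  have h1 : F x ≤ atTop.liminf (fun n => F (v (φ n))) := hF x (fun n => v (φ n)) hφt
  have h2 : (fun n => F (v (φ n))) = fun n => b (φ n) := funext fun n => hvF (φ n)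
  have h3 : Tendsto (fun n => b (φ n)) atTop (𝓝 (sInf (F '' K))) :=
    hb.comp (hφ.tendsto_atTop)
  rw [h2, h3.liminf_eq] at h1
  exact h1.trans (sInf_le ⟨y, hy, rfl⟩)

lemma exists_clopen_sep {X : Type*} [TopologicalSpace X] [T2Space X] {C : Set X}
    (hC : IsCompact C) {k : ℕ} (x : Fin k → X) (hx : ∀ i, x i ∈ C)
    (hdiff : ∀ i j, i ≠ j → connectedComponentIn C (x i) ≠ connectedComponentIn C (x j)) :
    ∃ O : Fin k → Set X, (∀ i, IsOpen (O i)) ∧ (∀ i, IsClosed (O i ∩ C)) ∧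
      (∀ i, connectedComponentIn C (x i) ⊆ O i ∩ C) ∧
      (∀ i j, i ≠ j → ∀ y, y ∈ O i ∩ C → y ∉ O j ∩ C) := by
  haveI : CompactSpace C := isCompact_iff_compactSpace.mp hC
  set x' : Fin k → C := fun i => ⟨x i, hx i⟩ with hx'
  have hne : ∀ i j, i ≠ j → connectedComponent (x' i) ≠ connectedComponent (x' j) := by
    intro i j hij h
    apply hdiff i j hij
    rw [connectedComponentIn_eq_image (hx i), connectedComponentIn_eq_image (hx j)]
    exact congrArg _ h
  have hmem : ∀ i j, i ≠ j → x' j ∉ connectedComponent (x' i) := by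
    intro i j hij h
    exact hne i j hij (connectedComponent_eq h)
  have hsep : ∀ i j, i ≠ j → ∃ Z : Set C, IsClopen Z ∧ x' i ∈ Z ∧ x' j ∉ Z := by
    intro i j hij
    by_contra h
    push_neg at h
    apply hmem i j hij
    rw [connectedComponent_eq_iInter_isClopen (x' i)]
    exact mem_iInter.2 fun s => h s s.2.1 s.2.2
  choose Z hZc hZi hZj using hsep
  set A : Fin k → Set C := fun i =>
    ⋂ j, ⋂ (h : i ≠ j), (Z i j h ∩ (Z j i (Ne.symm h))ᶜ) with hA
  have hAclopen : ∀ i, IsClopen (A i) := by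
    intro i
    refine isClopen_iInter_of_finite fun j => ?_
    by_cases h : i ≠ j
    · have he : (⋂ (hh : i ≠ j), Z i j hh ∩ (Z j i (Ne.symm hh))ᶜ)
          = Z i j h ∩ (Z j i (Ne.symm h))ᶜ := by
        ext z; simp [h]
      rw [he]
      exact (hZc i j h).inter (hZc j i (Ne.symm h)).compl
    · have he : (⋂ (hh : i ≠ j), Z i j hh ∩ (Z j i (Ne.symm hh))ᶜ) = univ := by
        ext z; simp [h]
      rw [he]
      exact isClopen_univ
  have hxA : ∀ i, x' i ∈ A i := by
    intro i
    refine mem_iInter.2 fun j => mem_iInter.2 fun h => ⟨hZi i j h, fun hc => hZj j i (Ne.symm h) hc⟩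
  have hAdisj : ∀ i j, i ≠ j → ∀ z, z ∈ A i → z ∉ A j := by
    intro i j hij z hzi hzj
    have h1 : z ∈ Z i j hij ∩ (Z j i (Ne.symm hij))ᶜ := by
      have := mem_iInter.1 (mem_iInter.1 hzi j)
      exact this hij
    have h2 : z ∈ Z j i (Ne.symm hij) ∩ (Z i j (Ne.symm (Ne.symm hij)))ᶜ := by
      have := mem_iInter.1 (mem_iInter.1 hzj i)
      exact this (Ne.symm hij)
    exact h1.2 h2.1
  have hAcomp : ∀ i, connectedComponent (x' i) ⊆ A i := fun i =>
    (hAclopen i).connectedComponent_subset (hxA i)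
  -- extract open sets
  have hAopen : ∀ i, ∃ O : Set X, IsOpen O ∧ Subtype.val ⁻¹' O = A i := by
    intro i
    exact isOpen_induced_iff.1 (hAclopen i).isOpen
  choose O hOopen hOpre using hAopen
  have himg : ∀ i, Subtype.val '' A i = O i ∩ C := by
    intro i
    rw [← hOpre i, Subtype.image_preimage_coe, inter_comm]
  refine ⟨O, hOopen, ?_, ?_, ?_⟩
  · intro i
    rw [← himg i]
    exact (((hAclopen i).isClosed.isCompact).image continuous_subtype_val).isClosed
  · intro i
    rw [connectedComponentIn_eq_image (hx i), ← himg i]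
    exact image_mono (hAcomp i)
  · intro i j hij y hyi hyj
    have hyC : y ∈ C := hyi.2
    have h1 : (⟨y, hyC⟩ : C) ∈ A i := by rw [← hOpre i]; exact hyi.1
    have h2 : (⟨y, hyC⟩ : C) ∈ A j := by rw [← hOpre j]; exact hyj.1
    exact hAdisj i j hij _ h1 h2

theorem stmt_2 {X : Type*} [τ : TopologicalSpace X] [T2Space X]
    (Φ Ψ : X → EReal) (hΦbot : ∀ x, Φ x ≠ ⊥) (hΨbot : ∀ x, Ψ x ≠ ⊥)
    (k : ℕ) (hk : 0 < k) (ρ : ℝ) (hρ : (⨅ x, Ψ x) < (ρ : EReal))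
    (hcpt : IsCompact (closure (Ψ ⁻¹' Set.Iio (ρ : EReal))))
    (hseqcpt : IsSeqCompact (closure (Ψ ⁻¹' Set.Iio (ρ : EReal))))
    (hcomp : ∃ x : Fin k → X, (∀ i, x i ∈ closure (Ψ ⁻¹' Set.Iio (ρ : EReal))) ∧
      ∀ i j, i ≠ j →
        connectedComponentIn (closure (Ψ ⁻¹' Set.Iio (ρ : EReal))) (x i) ≠
          connectedComponentIn (closure (Ψ ⁻¹' Set.Iio (ρ : EReal))) (x j))
    (hint : ∀ x ∈ closure (Ψ ⁻¹' Set.Iio (ρ : EReal)),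
      (connectedComponentIn (closure (Ψ ⁻¹' Set.Iio (ρ : EReal))) x ∩
        interior {y | Φ y ≠ ⊤}).Nonempty)
    (hbd : ∃ m : ℝ, ∀ x ∈ closure (Ψ ⁻¹' Set.Iio (ρ : EReal)), (m : EReal) ≤ Φ x)
    (hlsc : ∃ lam' > (0 : ℝ), ∀ lam : ℝ, 0 < lam → lam ≤ lam' →
      SeqLowerSemicontinuousE (fun x => Ψ x + (lam : EReal) * Φ x)) :
    ∃ lamStar > (0 : ℝ), ∀ lam : ℝ, 0 < lam → lam < lamStar →
      ∃ m : Fin k → X, Function.Injective m ∧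
        ∀ i, (m i ∈ {y | Φ y ≠ ⊤} ∩ Ψ ⁻¹' Set.Iio (ρ : EReal)) ∧
          ∃ U : Set X, (tauPsi τ Ψ).IsOpen U ∧ m i ∈ U ∧
            ∀ y ∈ U, Ψ (m i) + (lam : EReal) * Φ (m i) ≤ Ψ y + (lam : EReal) * Φ y := by
  classical
  obtain ⟨x, hx, hdiff⟩ := hcomp
  obtain ⟨m, hm⟩ := hbd
  obtain ⟨lam', hlam', hlsc'⟩ := hlsc
  set S := Ψ ⁻¹' Set.Iio (ρ : EReal) with hSdef
  set C := closure S with hCdef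
  obtain ⟨O, hOopen, hOcl, hOcomp, hOdisj⟩ := exists_clopen_sep hcpt x hx hdiff
  -- choose points w i ∈ S ∩ O i with Φ (w i) ≠ ⊤
  have hw : ∀ i, ∃ w, w ∈ S ∧ w ∈ O i ∧ Φ w ≠ ⊤ := by
    intro i
    obtain ⟨z, hz1, hz2⟩ := hint (x i) (hx i)
    have hzO : z ∈ O i := (hOcomp i hz1).1
    have hzC : z ∈ C := (hOcomp i hz1).2
    have hop : IsOpen (O i ∩ interior {y | Φ y ≠ ⊤}) := (hOopen i).inter isOpen_interior
    obtain ⟨v, hv1, hv2⟩ := mem_closure_iff.1 hzC _ hop ⟨hzO, hz2⟩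
    exact ⟨v, hv2, hv1.1, interior_subset hv1.2⟩
  choose w hwS hwO hwT using hw
  have hwC : ∀ i, w i ∈ C := fun i => subset_closure (hwS i)
  have hΨw_ne_top : ∀ i, Ψ (w i) ≠ ⊤ := fun i => ne_top_of_lt (hwS i)
  set s : Fin k → ℝ := fun i => (Ψ (w i)).toReal with hsdef
  set t : Fin k → ℝ := fun i => (Φ (w i)).toReal with htdef
  have hΨw : ∀ i, Ψ (w i) = (s i : EReal) :=
    fun i => (EReal.coe_toReal (hΨw_ne_top i) (hΨbot _)).symm
  have hΦw : ∀ i, Φ (w i) = (t i : EReal) :=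
    fun i => (EReal.coe_toReal (hwT i) (hΦbot _)).symm
  have hsρ : ∀ i, s i < ρ := by
    intro i
    have h := hwS i
    rw [hSdef, Set.mem_preimage, Set.mem_Iio, hΨw i] at h
    exact_mod_cast h
  have hmt : ∀ i, m ≤ t i := by
    intro i
    have h := hm (w i) (hwC i)
    rw [hΦw i] at h
    exact_mod_cast h
  set lamI : Fin k → ℝ := fun i => (ρ - s i) / (t i - m + 1) with hlamIdef
  have htm_pos : ∀ i, 0 < t i - m + 1 := fun i => by linarith [hmt i]
  have hlamI : ∀ i, 0 < lamI i := fun i => div_pos (by linarith [hsρ i]) (htm_pos i)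
  haveI : Nonempty (Fin k) := ⟨⟨0, hk⟩⟩
  set lamStar := min lam' (Finset.univ.inf' Finset.univ_nonempty lamI) with hlamStardef
  refine ⟨lamStar, lt_min hlam' ((Finset.lt_inf'_iff _).2 fun i _ => hlamI i), ?_⟩
  intro lam hlam hlamlt
  have hlam_le : lam ≤ lam' := le_of_lt (hlamlt.trans_le (min_le_left _ _))
  have hlam_i : ∀ i, lam < lamI i := fun i =>
    lt_of_lt_of_le hlamlt ((min_le_right _ _).trans (Finset.inf'_le _ (Finset.mem_univ i)))
  set F : X → EReal := fun y => Ψ y + (lam : EReal) * Φ y with hFdef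
  have hFlsc : SeqLowerSemicontinuousE F := hlsc' lam hlam hlam_le
  have hminex : ∀ i, ∃ u ∈ O i ∩ C, ∀ y ∈ O i ∩ C, F u ≤ F y := fun i =>
    exists_min_aux hseqcpt inter_subset_right (hOcl i) ⟨w i, hwO i, hwC i⟩ hFlsc
  choose u hu hmin using hminex
  have hFub : ∀ i, F (u i) ≤ ((s i + lam * t i : ℝ) : EReal) := by
    intro i
    have h := hmin i (w i) ⟨hwO i, hwC i⟩
    rw [hFdef] at h
    simp only at h
    rwa [hΨw i, hΦw i, ← EReal.coe_mul, ← EReal.coe_add] at h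
  have hΦu_ne_top : ∀ i, Φ (u i) ≠ ⊤ := by
    intro i hc
    have h1 : F (u i) = ⊤ := by
      rw [hFdef]
      simp only
      rw [hc, EReal.coe_mul_top_of_pos hlam, EReal.add_top_iff_ne_bot.2 (hΨbot _)]
    have h2 := hFub i
    rw [h1] at h2
    exact EReal.coe_ne_top _ (top_le_iff.1 h2)
  have hΦu : ∀ i, Φ (u i) = (((Φ (u i)).toReal : ℝ) : EReal) :=
    fun i => (EReal.coe_toReal (hΦu_ne_top i) (hΦbot _)).symm
  have hΨu_ne_top : ∀ i, Ψ (u i) ≠ ⊤ := by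
    intro i hc
    have h1 : F (u i) = ⊤ := by
      rw [hFdef]
      simp only
      rw [hc, hΦu i, ← EReal.coe_mul, EReal.top_add_coe]
    have h2 := hFub i
    rw [h1] at h2
    exact EReal.coe_ne_top _ (top_le_iff.1 h2)
  have hΨu : ∀ i, Ψ (u i) = (((Ψ (u i)).toReal : ℝ) : EReal) :=
    fun i => (EReal.coe_toReal (hΨu_ne_top i) (hΨbot _)).symm
  have hΨuρ : ∀ i, Ψ (u i) < (ρ : EReal) := by
    intro i
    set a := (Ψ (u i)).toReal
    set b := (Φ (u i)).toReal
    have hab : a + lam * b ≤ s i + lam * t i := by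
      have h := hFub i
      rw [hFdef] at h
      simp only at h
      rw [hΨu i, hΦu i, ← EReal.coe_mul, ← EReal.coe_add] at h
      exact_mod_cast h
    have hmb : m ≤ b := by
      have h := hm (u i) (hu i).2
      rw [hΦu i] at h
      exact_mod_cast h
    have h2 : lam * (t i - m + 1) < ρ - s i := (lt_div_iff₀ (htm_pos i)).1 (hlam_i i)
    have haρ : a < ρ := by nlinarith [mul_le_mul_of_nonneg_left hmb (le_of_lt hlam)]
    rw [hΨu i]
    exact_mod_cast haρ
  refine ⟨u, ?_, ?_⟩
  · intro i j hij
    by_contra hne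
    exact hOdisj i j hne (u i) (hu i) (hij ▸ hu j)
  · intro i
    refine ⟨⟨hΦu_ne_top i, hΨuρ i⟩, O i ∩ S, ?_, ⟨(hu i).1, hΨuρ i⟩, ?_⟩
    · exact TopologicalSpace.GenerateOpen.inter _ _
        (TopologicalSpace.GenerateOpen.basic _ (Or.inl (hOopen i)))
        (TopologicalSpace.GenerateOpen.basic _ (Or.inr ⟨ρ, rfl⟩))
    · intro y hy
      exact hmin i y ⟨hy.1, subset_closure hy.2⟩
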